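/- Let H be a separable Hilbert space, D = D* with compact resolvent, {h_m} an orthonormal eigenbasis of D, and U : H → L²(F,μ) a unitary. Let g be a bounded Borel function such that g(D) is Hilbert–Schmidt, and let f be a measurable function on F. Then T_f g(D) (defined on the span of the h_m) extends to a Hilbert–Schmidt operator if and only if f ∈ L²(F,μ₂), and in that case ‖T_f g(D)‖₂ = ‖f‖_{L²(F,μ₂)}. -/

import Mathlib

open MeasureTheory Filter Topology ComplexConjugate
open scoped ENNReal NNReal InnerProductSpace RealInnerProductSpace

noncomputable section

namespace NCG

variable {H : Type*} [NormedAddCommGroup H] [InnerProductSpace ℂ H] [CompleteSpace H]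

/-- `sv T n` : the `n`-th approximation number of `T`; for compact `T` this is the
`(n+1)`-st singular value `μ_{n+1}(T)` of the paper. -/
def sv (T : H →L[ℂ] H) (n : ℕ) : ℝ :=
  sInf { c | ∃ S : H →L[ℂ] H, Module.rank ℂ (LinearMap.range (S : H →ₗ[ℂ] H)) ≤ n ∧ c = ‖T - S‖ }

/-- `gam T k = (log (1+(k+1)))⁻¹ * ∑_{n=1}^{k+1} μ_n(T)` : the sequence `γ(T)` of the paper,
with the `0`-indexing `gam T k = γ(T)_{k+1}`. -/
def gam (T : H →L[ℂ] H) (k : ℕ) : ℝ :=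
  (Real.log ((k : ℝ) + 2))⁻¹ * ∑ n ∈ Finset.range (k + 1), sv T n

/-- membership in the ideal `𝓛^{1,∞}`. -/
def MemL1Inf (T : H →L[ℂ] H) : Prop :=
  IsCompactOperator T ∧ BddAbove (Set.range (gam T))

/-- the norm `‖T‖_{1,∞}`. -/
def norm1Inf (T : H →L[ℂ] H) : ℝ := ⨆ k, gam T k

/-- membership in `𝓛^{1,∞}_0`, i.e. `limsup_k γ(T)_k = 0`. -/
def MemL1Inf0 (T : H →L[ℂ] H) : Prop :=
  IsCompactOperator T ∧ Tendsto (gam T) atTop (𝓝 0)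

/-- the seminorm `‖T‖₀ = inf { ‖T - V‖_{1,∞} : V ∈ 𝓛^{1,∞}_0 }`. -/
def norm0 (T : H →L[ℂ] H) : ℝ :=
  sInf { c | ∃ V : H →L[ℂ] H, MemL1Inf0 V ∧ c = norm1Inf (T - V) }

/-- trace class operators `𝓛¹`. -/
def MemTraceClass (T : H →L[ℂ] H) : Prop :=
  IsCompactOperator T ∧ Summable (sv T)

/-- the Schatten class `𝓛^p`. -/
def MemSchatten (p : ℝ) (T : H →L[ℂ] H) : Prop :=
  IsCompactOperator T ∧ Summable (fun n => sv T n ^ p)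

/-- `zeta T s = Tr(|T|^s) = ∑_n μ_n(T)^s`. -/
def zeta (T : H →L[ℂ] H) (s : ℝ) : ℝ := ∑' n, sv T n ^ s

/-- `‖T‖_{Z₁} = limsup_{s→1⁺} (s-1) (Tr |T|^s)^{1/s}`. -/
def normZ1 (T : H →L[ℂ] H) : ℝ :=
  limsup (fun s : ℝ => (s - 1) * zeta T s ^ (1 / s)) (𝓝[>] (1 : ℝ))

/-- a bounded sequence (i.e. an element of `ℓ^∞`). -/
def Bdd (a : ℕ → ℝ) : Prop := ∃ C, ∀ k, |a k| ≤ C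

/-- A generalized limit: a state on `ℓ^∞` squeezed between `liminf` and `limsup` on
(bounded) positive sequences.  We realise functionals on `ℓ^∞` as linear functionals on the
space of all sequences; only their values on bounded sequences are ever used. -/
def IsGenLim (ω : (ℕ → ℝ) →ₗ[ℝ] ℝ) : Prop :=
  (ω fun _ => 1) = 1 ∧
  ∀ a : ℕ → ℝ, (∀ k, 0 ≤ a k) → Bdd a →
    liminf a atTop ≤ ω a ∧ ω a ≤ limsup a atTop

/-- A Banach limit: a shift-invariant generalized limit (the class `BL`). -/
def IsBanachLim (ω : (ℕ → ℝ) →ₗ[ℝ] ℝ) : Prop :=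
  IsGenLim ω ∧ ∀ a : ℕ → ℝ, Bdd a → ∀ j : ℕ, (ω fun k => a (k + j)) = ω a

/-- A dilation-invariant generalized limit (the class `DL`);
in the `0`-indexed picture `(D_j a)_k = a_{⌈(k+1)/j⌉ - 1} = a_{k / j}` (ℕ-division). -/
def IsDilLim (ω : (ℕ → ℝ) →ₗ[ℝ] ℝ) : Prop :=
  IsGenLim ω ∧ ∀ a : ℕ → ℝ, Bdd a → ∀ j : ℕ, 1 ≤ j → (ω fun k => a (k / j)) = ω a

/-- The class `DL₂` (relative to the Hilbert space `H`): generalized limits that are invariant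
under the dilation `D₂` on the sequences `γ(T)`, `0 ≤ T ∈ 𝓛^{1,∞}`. -/
def IsDL2 (H : Type*) [NormedAddCommGroup H] [InnerProductSpace ℂ H] [CompleteSpace H]
    (ω : (ℕ → ℝ) →ₗ[ℝ] ℝ) : Prop :=
  IsGenLim ω ∧
  ∀ T : H →L[ℂ] H, T.IsPositive → MemL1Inf T →
    (ω fun k => gam T (k / 2)) = ω (gam T)

/-- `Φ` is (an extension to `B(H)` of) the Dixmier trace `Tr_ω`: a linear functional agreeing
with `T ↦ ω(γ(T))` on positive elements of `𝓛^{1,∞}`.  Any such `Φ` agrees with `Tr_ω` on all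
of `𝓛^{1,∞}`. -/
def IsDixTr (ω : (ℕ → ℝ) →ₗ[ℝ] ℝ) (Φ : (H →L[ℂ] H) →ₗ[ℂ] ℂ) : Prop :=
  ∀ T : H →L[ℂ] H, T.IsPositive → MemL1Inf T → Φ T = (ω (gam T) : ℂ)

/-- `T` is measurable in the sense of Connes (`T` positive case). -/
def ConnesMeasurable (T : H →L[ℂ] H) : Prop :=
  ∃ c : ℝ, ∀ ω : (ℕ → ℝ) →ₗ[ℝ] ℝ, IsDL2 H ω → ω (gam T) = c

/-- The transform `𝓛(ω) = ω ∘ E ∘ L⁻¹ ∘ p` of the paper, in the `0`-indexed picture: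
`(E(L⁻¹(p(a))))_{k+1} = ∫_k^{k+1} a_{⌊e^t⌋} dt`. -/
def LTrans (a : ℕ → ℝ) : ℕ → ℝ := fun k => ∫ t in (k : ℝ)..((k : ℝ) + 1), a (⌊Real.exp t⌋₊ - 1)


variable {F : Type*} [MeasurableSpace F] {μ : Measure F}

/-- `𝓕_D(w)(x) = ∑_m w(λ_m) |(U h_m)(x)|²` (real-valued weights). -/
def FDr (h : ℕ → H) (lam : ℕ → ℝ) (U : H ≃ₗᵢ[ℂ] Lp ℂ 2 μ) (w : ℝ → ℝ) (x : F) : ℝ :=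
  ∑' m, w (lam m) * ‖(U (h m) : F → ℂ) x‖ ^ 2

/-- `𝓕_D(g)(x)` for complex `g`. -/
def FDc (h : ℕ → H) (lam : ℕ → ℝ) (U : H ≃ₗᵢ[ℂ] Lp ℂ 2 μ) (g : ℝ → ℂ) (x : F) : ℂ :=
  ∑' m, g (lam m) * (‖(U (h m) : F → ℂ) x‖ : ℂ) ^ 2

/-- the measure on `F` with density `𝓕_D(w)` with respect to `μ`. -/
def densMeas (h : ℕ → H) (lam : ℕ → ℝ) (U : H ≃ₗᵢ[ℂ] Lp ℂ 2 μ) (w : ℝ → ℝ) : Measure F :=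
  μ.withDensity fun x => ENNReal.ofReal (FDr h lam U w x)

/-- `S` is (the bounded closure of) the densely defined operator `T_f g(D)`,
where `g(D) h_m = g(λ_m) h_m` and `T_f = U* M_f U`. -/
def ExtMulDiag (h : ℕ → H) (lam : ℕ → ℝ) (U : H ≃ₗᵢ[ℂ] Lp ℂ 2 μ) (g : ℝ → ℂ) (f : F → ℂ)
    (S : H →L[ℂ] H) : Prop :=
  ∀ m, (U (S (h m)) : F → ℂ) =ᵐ[μ] fun x => g (lam m) * (f x * (U (h m) : F → ℂ) x)

/-- `P = T_{χ_J} = U* M_{χ_J} U` is the multiplication projection by the set `J`. -/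
def IsMulProj (U : H ≃ₗᵢ[ℂ] Lp ℂ 2 μ) (J : Set F) (P : H →L[ℂ] H) : Prop :=
  ∀ ψ : H, (U (P ψ) : F → ℂ) =ᵐ[μ] J.indicator (U ψ : F → ℂ)

/-- `S` is the operator `g(D)^{1/2} T_f g(D)^{1/2}` read through its matrix elements in the
eigenbasis `h`. -/
def ExtSymDiag (h : ℕ → H) (lam : ℕ → ℝ) (U : H ≃ₗᵢ[ℂ] Lp ℂ 2 μ) (g : ℝ → ℝ) (f : F → ℂ)
    (S : H →L[ℂ] H) : Prop :=
  ∀ j m : ℕ, (inner ℂ (h j) (S (h m)) : ℂ) =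
    (Real.sqrt (g (lam j)) * Real.sqrt (g (lam m)) : ℝ) *
      ∫ x, f x * (U (h m) : F → ℂ) x * (starRingEnd ℂ) ((U (h j) : F → ℂ) x) ∂μ

/-- Hilbert–Schmidt relative to an orthonormal basis `h`. -/
def MemHS (h : ℕ → H) (T : H →L[ℂ] H) : Prop :=
  Summable fun m => ‖T (h m)‖ ^ 2

/-- the Hilbert–Schmidt norm. -/
def normHS (h : ℕ → H) (T : H →L[ℂ] H) : ℝ :=
  Real.sqrt (∑' m, ‖T (h m)‖ ^ 2)

/-- the trace relative to an orthonormal basis `h`. -/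
def traceIn (h : ℕ → H) (T : H →L[ℂ] H) : ℂ := ∑' m, (inner ℂ (h m) (T (h m)) : ℂ)

/-- the `‖·‖_{1,∞,p}` norm with respect to the family of measures `s ↦ ν s` :
`sup_{1<s≤2} (s-1)^{1/p} ‖f‖_{L^p(ν s)}`. -/
def normOneInfP (ν : ℝ → Measure F) (p : ℝ≥0∞) (f : F → ℂ) : ℝ :=
  sSup { c | ∃ s : ℝ, 1 < s ∧ s ≤ 2 ∧
    c = (s - 1) ^ (1 / p.toReal) * (eLpNorm f p (ν s)).toReal }

/-- membership in `L^p(F, μ_{1,∞})`. -/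
def MemLpOneInf (ν : ℝ → Measure F) (p : ℝ≥0∞) (f : F → ℂ) : Prop :=
  (∀ s : ℝ, 1 < s → MemLp f p (ν s)) ∧
  BddAbove { c | ∃ s : ℝ, 1 < s ∧ s ≤ 2 ∧
    c = (s - 1) ^ (1 / p.toReal) * (eLpNorm f p (ν s)).toReal }

/-- membership in `L^p₀(F, μ_{1,∞})`: the closure of the (measurable) step functions in the
`‖·‖_{1,∞,p}` norm. -/
def MemLp0OneInf (ν : ℝ → Measure F) (p : ℝ≥0∞) (f : F → ℂ) : Prop :=
  MemLpOneInf ν p f ∧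
  ∀ ε > (0 : ℝ), ∃ φ : SimpleFunc F ℂ, ∀ s : ℝ, 1 < s → s ≤ 2 →
    (s - 1) ^ (1 / p.toReal) * (eLpNorm (f - ⇑φ) p (ν s)).toReal ≤ ε

/-- membership in `L^∞(F, μ_{1,∞})`. -/
def MemLInfOneInf (ν : ℝ → Measure F) (f : F → ℂ) : Prop :=
  (∀ s : ℝ, 1 < s → MemLp f ⊤ (ν s)) ∧
  BddAbove { c | ∃ s : ℝ, 1 < s ∧ s ≤ 2 ∧ c = (eLpNorm f ⊤ (ν s)).toReal }



lemma lint_sq {F : Type*} [MeasurableSpace F] (μ : Measure F) (f : F → ℂ) :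
    ∫⁻ x, (‖f x‖₊ : ℝ≥0∞) ^ 2 ∂μ = (eLpNorm f 2 μ) ^ 2 := by
  rw [eLpNorm_eq_lintegral_rpow_enorm_toReal (by norm_num) (by norm_num)]
  simp only [enorm_eq_nnnorm]
  have h2 : ((2:ℝ≥0∞)).toReal = (2:ℝ) := by norm_num
  rw [h2, ← ENNReal.rpow_natCast _ 2, ← ENNReal.rpow_mul]
  norm_num

/-- Proposition 2.1 of the paper.
Let `H` be a separable Hilbert space, `D = D*` with compact resolvent, `{h_m}` an orthonormal
eigenbasis of `D` with eigenvalues `λ_m`, and `U : H → L²(F,μ)` a unitary.  Let `g` be a bounded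
Borel function such that `g(D)` is Hilbert–Schmidt, and `f` a measurable function on `F`.  Then
`T_f g(D)` (defined on the span of the `h_m`) extends to a Hilbert–Schmidt operator if and only
if `f ∈ L²(F,μ₂)`, and in that case `‖T_f g(D)‖₂ = ‖f‖_{L²(F,μ₂)}`, where `μ₂` is the measure
with density `𝓕_D(|g|²)` with respect to `μ`. -/
theorem statement7
    {H : Type*} [NormedAddCommGroup H] [InnerProductSpace ℂ H] [CompleteSpace H]
    [TopologicalSpace.SeparableSpace H]
    {F : Type*} [MeasurableSpace F] (μ : Measure F)
    (h : ℕ → H) (lam : ℕ → ℝ)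
    (horth : Orthonormal ℂ h)
    (htotal : (Submodule.span ℂ (Set.range h)).topologicalClosure = ⊤)
    (hres : Tendsto (fun m => |lam m|) atTop atTop)  -- D has compact resolvent
    (U : H ≃ₗᵢ[ℂ] Lp ℂ 2 μ)
    (g : ℝ → ℂ) (hgmeas : Measurable g) (hgbdd : ∃ C, ∀ t, ‖g t‖ ≤ C)
    (gD : H →L[ℂ] H) (hgD : ∀ m, gD (h m) = g (lam m) • h m)
    (hgDHS : MemHS h gD)
    (f : F → ℂ) (hf : AEStronglyMeasurable f μ) :
    ((∃ S : H →L[ℂ] H, ExtMulDiag h lam U g f S ∧ MemHS h S)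
        ↔ MemLp f 2 (densMeas h lam U (fun t => ‖g t‖ ^ 2))) ∧
    ∀ S : H →L[ℂ] H, ExtMulDiag h lam U g f S → MemHS h S →
      normHS h S = (eLpNorm f 2 (densMeas h lam U (fun t => ‖g t‖ ^ 2))).toReal := by
  -- notation
  set μ₂ := densMeas h lam U (fun t => ‖g t‖ ^ 2) with hμ₂
  set w : ℕ → F → ℂ := fun m x => g (lam m) * (f x * (U (h m) : F → ℂ) x) with hwdef
  have hnorm1 : ∀ m, ‖h m‖ = 1 := horth.1
  -- summability of |g(λ_m)|²
  have hgsum : Summable fun m => ‖g (lam m)‖ ^ 2 := by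
    have := hgDHS
    unfold MemHS at this
    convert this using 2 with m
    rw [hgD m, norm_smul, hnorm1 m, mul_one]
  -- the ENNReal density G
  set G : F → ℝ≥0∞ := fun x =>
    ∑' m, ((‖g (lam m)‖₊ : ℝ≥0∞)) ^ 2 * ((‖(U (h m) : F → ℂ) x‖₊ : ℝ≥0∞)) ^ 2 with hGdef
  have hUmeas : ∀ m, Measurable fun x => ((‖(U (h m) : F → ℂ) x‖₊ : ℝ≥0∞)) ^ 2 := by
    intro m
    exact ((Lp.stronglyMeasurable (U (h m))).measurable.nnnorm.coe_nnreal_ennreal).pow_const 2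
  have hGmeas : Measurable G := by
    apply Measurable.ennreal_tsum
    intro m
    exact (measurable_const.mul (hUmeas m))
  have hUint : ∀ m, ∫⁻ x, ((‖(U (h m) : F → ℂ) x‖₊ : ℝ≥0∞)) ^ 2 ∂μ = 1 := by
    intro m
    rw [lint_sq]
    have h1 : eLpNorm (U (h m) : F → ℂ) 2 μ = ENNReal.ofReal ‖U (h m)‖ := by
      rw [Lp.norm_def, ENNReal.ofReal_toReal (Lp.eLpNorm_ne_top _)]
    rw [h1, U.norm_map, hnorm1 m]
    simp
  have hGint : ∫⁻ x, G x ∂μ = ∑' m, ((‖g (lam m)‖₊ : ℝ≥0∞)) ^ 2 := by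
    rw [lintegral_tsum (f := fun m x => ((‖g (lam m)‖₊ : ℝ≥0∞)) ^ 2 * ((‖(U (h m) : F → ℂ) x‖₊ : ℝ≥0∞)) ^ 2)
      fun m => (measurable_const.mul (hUmeas m)).aemeasurable]
    congr 1 with m
    rw [lintegral_const_mul _ (hUmeas m), hUint m, mul_one]
  have hGfin : ∫⁻ x, G x ∂μ ≠ ⊤ := by
    rw [hGint]
    have hs : Summable fun m => (‖g (lam m)‖₊ ^ 2 : ℝ≥0) := by
      rw [← NNReal.summable_coe]
      convert hgsum using 2 with m
      simp
    have : (fun m => ((‖g (lam m)‖₊ : ℝ≥0∞)) ^ 2)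
        = fun m => ((‖g (lam m)‖₊ ^ 2 : ℝ≥0) : ℝ≥0∞) := by
      funext m; push_cast; rfl
    rw [this]
    exact ENNReal.tsum_coe_ne_top_iff_summable.2 hs
  have hGae : ∀ᵐ x ∂μ, G x < ⊤ := ae_lt_top hGmeas hGfin
  -- identification of μ₂ with withDensity G
  have hFDr : ∀ x, FDr h lam U (fun t => ‖g t‖ ^ 2) x = (G x).toReal := by
    intro x
    rw [hGdef]
    rw [ENNReal.tsum_toReal_eq (fun m => ENNReal.mul_ne_top (by simp) (by simp))]
    unfold FDr
    congr 1 with m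
  have hμ₂G : μ₂ = μ.withDensity G := by
    rw [hμ₂]
    unfold densMeas
    apply withDensity_congr_ae
    filter_upwards [hGae] with x hx
    rw [hFDr x, ENNReal.ofReal_toReal hx.ne]
  have hμ₂ac : μ₂ ≪ μ := by rw [hμ₂G]; exact withDensity_absolutelyContinuous μ G
  -- pointwise norm of w m
  have hwnn : ∀ m x, ((‖w m x‖₊ : ℝ≥0∞)) ^ 2 =
      ((‖g (lam m)‖₊ : ℝ≥0∞)) ^ 2 * ((‖(U (h m) : F → ℂ) x‖₊ : ℝ≥0∞)) ^ 2
        * ((‖f x‖₊ : ℝ≥0∞)) ^ 2 := by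
    intro m x
    rw [hwdef]
    simp only [nnnorm_mul, ENNReal.coe_mul, mul_pow]
    ring
  -- the key identity
  have hwm_meas : ∀ m, AEMeasurable (fun x => ((‖w m x‖₊ : ℝ≥0∞)) ^ 2) μ := by
    intro m
    exact ((aemeasurable_const.mul (hf.aemeasurable.mul
      (Lp.stronglyMeasurable (U (h m))).measurable.aemeasurable)).nnnorm.coe_nnreal_ennreal).pow_const 2
  have hkey : ∫⁻ x, ((‖f x‖₊ : ℝ≥0∞)) ^ 2 ∂μ₂ = ∑' m, ∫⁻ x, ((‖w m x‖₊ : ℝ≥0∞)) ^ 2 ∂μ := by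
    calc ∫⁻ x, ((‖f x‖₊ : ℝ≥0∞)) ^ 2 ∂μ₂
        = ∫⁻ x, (G * fun x => ((‖f x‖₊ : ℝ≥0∞)) ^ 2) x ∂μ := by
          rw [hμ₂G, lintegral_withDensity_eq_lintegral_mul_non_measurable₀ μ
            hGmeas.aemeasurable hGae]
      _ = ∫⁻ x, ∑' m, ((‖w m x‖₊ : ℝ≥0∞)) ^ 2 ∂μ := by
          apply lintegral_congr
          intro x
          simp only [Pi.mul_apply]
          rw [hGdef]
          simp only [hwnn]
          rw [ENNReal.tsum_mul_right]
      _ = ∑' m, ∫⁻ x, ((‖w m x‖₊ : ℝ≥0∞)) ^ 2 ∂μ := lintegral_tsum hwm_meas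
  -- eLpNorm of w m for operators satisfying ExtMulDiag
  have hSnorm : ∀ S : H →L[ℂ] H, ExtMulDiag h lam U g f S → ∀ m,
      eLpNorm (w m) 2 μ = ENNReal.ofReal ‖S (h m)‖ := by
    intro S hS m
    have h1 : eLpNorm (w m) 2 μ = eLpNorm ((U (S (h m)) : F → ℂ)) 2 μ :=
      (eLpNorm_congr_ae (hS m)).symm
    rw [h1, ← ENNReal.ofReal_toReal (Lp.eLpNorm_ne_top (U (S (h m)))), ← Lp.norm_def,
      U.norm_map]
  -- the square of the L² norm of f w.r.t. μ₂, for any extension S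
  have hAfor : ∀ S : H →L[ℂ] H, ExtMulDiag h lam U g f S → MemHS h S →
      (eLpNorm f 2 μ₂) ^ 2 = ENNReal.ofReal (∑' m, ‖S (h m)‖ ^ 2) := by
    intro S hS hSHS
    rw [← lint_sq, hkey, ENNReal.ofReal_tsum_of_nonneg (fun m => sq_nonneg _) hSHS]
    congr 1 with m
    rw [lint_sq, hSnorm S hS m, ← ENNReal.ofReal_pow (norm_nonneg _)]
  refine ⟨⟨?_, ?_⟩, ?_⟩
  · -- forward direction
    rintro ⟨S, hS, hSHS⟩
    refine ⟨hf.mono_ac hμ₂ac, ?_⟩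
    rw [lt_top_iff_ne_top]
    intro hc
    have := hAfor S hS hSHS
    rw [hc, ENNReal.top_pow (by norm_num)] at this
    exact ENNReal.ofReal_ne_top this.symm
  · -- backward direction : construct the extension
    intro hmem
    have hfin2 : ∑' m, ∫⁻ x, ((‖w m x‖₊ : ℝ≥0∞)) ^ 2 ∂μ ≠ ⊤ := by
      rw [← hkey, lint_sq]
      exact ENNReal.pow_ne_top hmem.2.ne
    have hwmem : ∀ m, MemLp (w m) 2 μ := by
      intro m
      refine ⟨aestronglyMeasurable_const.mul (hf.mul (Lp.aestronglyMeasurable (U (h m)))), ?_⟩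
      have h1 : (eLpNorm (w m) 2 μ) ^ 2 ≠ ⊤ := by
        rw [← lint_sq]
        exact ne_top_of_le_ne_top hfin2 (ENNReal.le_tsum m)
      rw [lt_top_iff_ne_top]
      intro hc
      rw [hc] at h1
      simp at h1
    set v : ℕ → H := fun m => U.symm ((hwmem m).toLp (w m)) with hvdef
    have hvnorm : ∀ m, ‖v m‖ = (eLpNorm (w m) 2 μ).toReal := by
      intro m
      rw [hvdef]
      simp only
      rw [U.symm.norm_map]
      exact Lp.norm_toLp _ _
    have hvsum : Summable fun m => ‖v m‖ ^ 2 := by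
      apply Summable.congr (ENNReal.summable_toReal hfin2)
      intro m
      rw [hvnorm m, ← ENNReal.toReal_pow, lint_sq]
    have hBessel : ∀ (ψ : H) (s : Finset ℕ),
        ∑ m ∈ s, ‖(inner ℂ (h m) ψ : ℂ)‖ ^ 2 ≤ ‖ψ‖ ^ 2 :=
      fun ψ s => horth.sum_inner_products_le ψ
    have hcsum : ∀ ψ : H, Summable fun m => ‖(inner ℂ (h m) ψ : ℂ)‖ ^ 2 := fun ψ =>
      summable_of_sum_le (fun m => sq_nonneg _) (hBessel ψ)
    have hprod : ∀ ψ : H, Summable fun m => ‖(inner ℂ (h m) ψ : ℂ)‖ * ‖v m‖ := by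
      intro ψ
      refine Summable.of_nonneg_of_le
        (fun m => mul_nonneg (norm_nonneg _) (norm_nonneg _)) (fun m => ?_)
        (((hcsum ψ).add hvsum).div_const 2)
      have := sq_nonneg (‖(inner ℂ (h m) ψ : ℂ)‖ - ‖v m‖)
      nlinarith
    have hnsum : ∀ ψ : H, Summable fun m => ‖(inner ℂ (h m) ψ : ℂ) • v m‖ := by
      intro ψ
      apply Summable.congr (hprod ψ)
      intro m
      rw [norm_smul]
    have hvec : ∀ ψ : H, Summable fun m => (inner ℂ (h m) ψ : ℂ) • v m := fun ψ =>
      (hnsum ψ).of_norm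
    set C : ℝ := Real.sqrt (∑' m, ‖v m‖ ^ 2) with hCdef
    have hCnn : 0 ≤ C := Real.sqrt_nonneg _
    have hbound : ∀ ψ : H, ‖∑' m, (inner ℂ (h m) ψ : ℂ) • v m‖ ≤ C * ‖ψ‖ := by
      intro ψ
      refine (norm_tsum_le_tsum_norm (hnsum ψ)).trans ?_
      have heq : ∑' m, ‖(inner ℂ (h m) ψ : ℂ) • v m‖
          = ∑' m, ‖(inner ℂ (h m) ψ : ℂ)‖ * ‖v m‖ :=
        tsum_congr fun m => norm_smul _ _
      rw [heq]
      apply Summable.tsum_le_of_sum_le (hprod ψ)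
      intro s
      set X := ∑ m ∈ s, ‖(inner ℂ (h m) ψ : ℂ)‖ * ‖v m‖ with hX
      have hXnn : 0 ≤ X :=
        Finset.sum_nonneg fun m _ => mul_nonneg (norm_nonneg _) (norm_nonneg _)
      have h1 : X ^ 2 ≤ (∑ m ∈ s, ‖(inner ℂ (h m) ψ : ℂ)‖ ^ 2) * ∑ m ∈ s, ‖v m‖ ^ 2 :=
        Finset.sum_mul_sq_le_sq_mul_sq s _ _
      have h2 : ∑ m ∈ s, ‖v m‖ ^ 2 ≤ ∑' m, ‖v m‖ ^ 2 :=
        Summable.sum_le_tsum s (fun m _ => sq_nonneg _) hvsum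
      have h3 := hBessel ψ s
      have h4 : X ^ 2 ≤ (C * ‖ψ‖) ^ 2 := by
        have hC2 : C ^ 2 = ∑' m, ‖v m‖ ^ 2 := by
          rw [hCdef, Real.sq_sqrt (tsum_nonneg fun m => sq_nonneg _)]
        have hs1 : (0:ℝ) ≤ ∑ m ∈ s, ‖(inner ℂ (h m) ψ : ℂ)‖ ^ 2 :=
          Finset.sum_nonneg fun m _ => sq_nonneg _
        have hs2 : (0:ℝ) ≤ ∑ m ∈ s, ‖v m‖ ^ 2 :=
          Finset.sum_nonneg fun m _ => sq_nonneg _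
        calc X ^ 2 ≤ (∑ m ∈ s, ‖(inner ℂ (h m) ψ : ℂ)‖ ^ 2) * ∑ m ∈ s, ‖v m‖ ^ 2 := h1
          _ ≤ ‖ψ‖ ^ 2 * (∑' m, ‖v m‖ ^ 2) := by
              apply mul_le_mul h3 h2 hs2 (sq_nonneg _)
          _ = (C * ‖ψ‖) ^ 2 := by rw [mul_pow, hC2]; ring
      have h5 : 0 ≤ C * ‖ψ‖ := mul_nonneg hCnn (norm_nonneg _)
      nlinarith
    set T : H →ₗ[ℂ] H :=
      { toFun := fun ψ => ∑' m, (inner ℂ (h m) ψ : ℂ) • v m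
        map_add' := by
          intro ψ φ
          simp only [inner_add_right, add_smul]
          exact Summable.tsum_add (hvec ψ) (hvec φ)
        map_smul' := by
          intro c ψ
          simp only [inner_smul_right, RingHom.id_apply, mul_smul]
          exact Summable.tsum_const_smul c (hvec ψ) } with hTdef
    set S : H →L[ℂ] H := T.mkContinuous C hbound with hSdef
    have hSh : ∀ j, S (h j) = v j := by
      intro j
      show ∑' m, (inner ℂ (h m) (h j) : ℂ) • v m = v j
      rw [tsum_eq_single j]
      · rw [orthonormal_iff_ite.1 horth j j]
        simp
      · intro m hm
        rw [orthonormal_iff_ite.1 horth m j]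
        simp [hm]
    refine ⟨S, ?_, ?_⟩
    · intro m
      rw [hSh m, hvdef]
      simp only
      rw [U.apply_symm_apply]
      exact (hwmem m).coeFn_toLp
    · unfold MemHS
      apply Summable.congr hvsum
      intro m
      rw [hSh m]
  · -- the norm identity
    intro S hS hSHS
    have hA := hAfor S hS hSHS
    have h2 : ((eLpNorm f 2 μ₂) ^ 2).toReal = ∑' m, ‖S (h m)‖ ^ 2 := by
      rw [hA, ENNReal.toReal_ofReal (tsum_nonneg fun m => sq_nonneg _)]
    rw [ENNReal.toReal_pow] at h2
    unfold normHS
    rw [← h2, Real.sqrt_sq ENNReal.toReal_nonneg]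



end NCG
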